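/- Let K and L be simplicial complexes on disjoint vertex sets {v₁,…,v_m} and {w₁,…,w_ℓ}, and let J = (a₁,…,a_m) and J′ = (b₁,…,b_ℓ) be vectors of positive integers. Then K(J) ⋆ L(J′) = (K ⋆ L)(J ∪ J′), where J ∪ J′ = (a₁,…,a_m,b₁,…,b_ℓ). -/

import Mathlib

variable {V W : Type*}

/-- `S` is a minimal non-face of `K`: it is not a face, but every proper subset is. -/
def MinNonFace (K : Set (Finset V)) (S : Finset V) : Prop :=
  S ∉ K ∧ ∀ T ⊂ S, T ∈ K

/-- The full fiber of `S ⊆ V` in the vertex set `Σ i, Fin (J i)` of `K(J)`: all copies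
`i_1, …, i_{J i}` of every vertex `i ∈ S`. -/
def fullCopy (J : V → ℕ) (S : Finset V) : Finset (Σ i : V, Fin (J i)) :=
  S.sigma fun _ => Finset.univ

/-- The simplicial complex `K(J)` on the vertex set `Σ i, Fin (J i)`: its minimal
non-faces are exactly the full fibers of the minimal non-faces of `K`; equivalently, a
subset is a face iff it contains no full fiber of a minimal non-face of `K`. -/
def wedgeJ (K : Set (Finset V)) (J : V → ℕ) : Set (Finset (Σ i : V, Fin (J i))) :=
  {τ | ∀ S : Finset V, MinNonFace K S → ¬ fullCopy J S ⊆ τ}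

/-- The join `K ⋆ L` of complexes on disjoint vertex sets, realized on `V ⊕ W`. -/
def joinOf [DecidableEq V] [DecidableEq W] (K : Set (Finset V)) (L : Set (Finset W)) :
    Set (Finset (V ⊕ W)) :=
  {τ | ∃ σ₁ ∈ K, ∃ σ₂ ∈ L, τ = σ₁.image Sum.inl ∪ σ₂.image Sum.inr}

/-- The canonical identification of the vertex set of `K(J) ⋆ L(J')` with that of
`(K ⋆ L)(J ∪ J')`. -/
def sumSigmaVertexEquiv (J : V → ℕ) (J' : W → ℕ) :
    ((Σ i : V, Fin (J i)) ⊕ (Σ j : W, Fin (J' j))) ≃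
      (Σ x : V ⊕ W, Fin (Sum.elim J J' x)) where
  toFun := Sum.elim (fun p => ⟨Sum.inl p.1, p.2⟩) (fun p => ⟨Sum.inr p.1, p.2⟩)
  invFun := fun p => match p with
    | ⟨Sum.inl i, k⟩ => Sum.inl ⟨i, k⟩
    | ⟨Sum.inr j, k⟩ => Sum.inr ⟨j, k⟩
  left_inv := by rintro (⟨i, k⟩ | ⟨j, k⟩) <;> rfl
  right_inv := by rintro ⟨(i | j), k⟩ <;> rfl

lemma mem_joinOf_iff [DecidableEq V] [DecidableEq W] (K : Set (Finset V)) (L : Set (Finset W))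
    (τ : Finset (V ⊕ W)) : τ ∈ joinOf K L ↔ τ.toLeft ∈ K ∧ τ.toRight ∈ L := by
  constructor
  · rintro ⟨σ₁, h₁, σ₂, h₂, rfl⟩
    constructor
    · convert h₁ using 1; ext x; simp
    · convert h₂ using 1; ext x; simp
  · rintro ⟨h₁, h₂⟩
    exact ⟨τ.toLeft, h₁, τ.toRight, h₂, by ext x; cases x <;> simp⟩

lemma subset_image_inl [DecidableEq V] [DecidableEq W] {S : Finset V} {T : Finset (V ⊕ W)}
    (h : T ⊆ S.image Sum.inl) : T = T.toLeft.image Sum.inl ∧ T.toLeft ⊆ S := by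
  constructor
  · ext x
    cases x with
    | inl a => simp
    | inr b =>
      simp only [Finset.mem_image, Finset.mem_toLeft]
      constructor
      · intro hb; have := h hb; simp at this
      · rintro ⟨a, _, h⟩; exact absurd h (by simp)
  · intro a ha
    have := h (Finset.mem_toLeft.1 ha)
    simpa using this

lemma subset_image_inr [DecidableEq V] [DecidableEq W] {S : Finset W} {T : Finset (V ⊕ W)}
    (h : T ⊆ S.image Sum.inr) : T = T.toRight.image Sum.inr ∧ T.toRight ⊆ S := by
  constructor
  · ext x
    cases x with
    | inr a => simp
    | inl b =>
      simp only [Finset.mem_image, Finset.mem_toRight]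
      constructor
      · intro hb; have := h hb; simp at this
      · rintro ⟨a, _, h⟩; exact absurd h (by simp)
  · intro a ha
    have := h (Finset.mem_toRight.1 ha)
    simpa using this

lemma minNonFace_joinOf_iff [DecidableEq V] [DecidableEq W] (K : Set (Finset V))
    (L : Set (Finset W)) (hKne : ∅ ∈ K) (hLne : ∅ ∈ L) (S : Finset (V ⊕ W)) :
    MinNonFace (joinOf K L) S ↔
      (∃ S', MinNonFace K S' ∧ S = S'.image Sum.inl) ∨
        (∃ T', MinNonFace L T' ∧ S = T'.image Sum.inr) := by
  constructor
  · rintro ⟨hS, hmin⟩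
    have hKL : ¬ (S.toLeft ∈ K ∧ S.toRight ∈ L) := fun h =>
      hS ((mem_joinOf_iff K L S).2 h)
    by_cases hk : S.toLeft ∈ K
    · -- then S.toRight ∉ L, and S must be purely right
      have hl : S.toRight ∉ L := fun h => hKL ⟨hk, h⟩
      have hleft : S.toLeft = ∅ := by
        by_contra hne
        obtain ⟨a, ha⟩ := Finset.nonempty_iff_ne_empty.2 hne
        have hsub : S.toRight.image Sum.inr ⊂ S := by
          constructor
          · intro x hx
            obtain ⟨b, hb, rfl⟩ := Finset.mem_image.1 hx
            exact Finset.mem_toRight.1 hb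
          · intro hcon
            have := hcon (Finset.mem_toLeft.1 ha)
            simp at this
        have := (mem_joinOf_iff K L _).1 (hmin _ hsub)
        have heq : (Finset.image (Sum.inr : W → V ⊕ W) S.toRight).toRight = S.toRight := by ext x; simp
        rw [heq] at this
        exact hl this.2
      refine Or.inr ⟨S.toRight, ⟨hl, ?_⟩, ?_⟩
      · intro T hT
        have hsub : T.image Sum.inr ⊂ S := by
          have hSeq : S = S.toRight.image Sum.inr := by
            ext x
            cases x with
            | inl a => simp [← Finset.mem_toLeft, hleft]
            | inr b => simp
          rw [hSeq]
          exact Finset.image_ssubset_image Sum.inr_injective |>.2 hT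
        have := (mem_joinOf_iff K L _).1 (hmin _ hsub)
        have heq : (T.image (Sum.inr : W → V ⊕ W)).toRight = T := by ext x; simp
        rw [heq] at this
        exact this.2
      · ext x
        cases x with
        | inl a => simp [← Finset.mem_toLeft, hleft]
        | inr b => simp
    · -- S.toLeft ∉ K, S must be purely left
      have hright : S.toRight = ∅ := by
        by_contra hne
        obtain ⟨a, ha⟩ := Finset.nonempty_iff_ne_empty.2 hne
        have hsub : S.toLeft.image Sum.inl ⊂ S := by
          constructor
          · intro x hx
            obtain ⟨b, hb, rfl⟩ := Finset.mem_image.1 hx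
            exact Finset.mem_toLeft.1 hb
          · intro hcon
            have := hcon (Finset.mem_toRight.1 ha)
            simp at this
        have := (mem_joinOf_iff K L _).1 (hmin _ hsub)
        have heq : (Finset.image (Sum.inl : V → V ⊕ W) S.toLeft).toLeft = S.toLeft := by ext x; simp
        rw [heq] at this
        exact hk this.1
      refine Or.inl ⟨S.toLeft, ⟨hk, ?_⟩, ?_⟩
      · intro T hT
        have hsub : T.image Sum.inl ⊂ S := by
          have hSeq : S = S.toLeft.image Sum.inl := by
            ext x
            cases x with
            | inl a => simp
            | inr b => simp [← Finset.mem_toRight, hright]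
          rw [hSeq]
          exact Finset.image_ssubset_image Sum.inl_injective |>.2 hT
        have := (mem_joinOf_iff K L _).1 (hmin _ hsub)
        have heq : (T.image (Sum.inl : V → V ⊕ W)).toLeft = T := by ext x; simp
        rw [heq] at this
        exact this.1
      · ext x
        cases x with
        | inl a => simp
        | inr b => simp [← Finset.mem_toRight, hright]
  · rintro (⟨S', ⟨hS', hmin'⟩, rfl⟩ | ⟨T', ⟨hT', hmin'⟩, rfl⟩)
    · constructor
      · intro hmem
        have := (mem_joinOf_iff K L _).1 hmem
        have heq : (S'.image (Sum.inl : V → V ⊕ W)).toLeft = S' := by ext x; simp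
        rw [heq] at this
        exact hS' this.1
      · intro T hT
        obtain ⟨hTeq, hTsub⟩ := subset_image_inl hT.subset
        have hss : T.toLeft ⊂ S' := by
          refine ⟨hTsub, fun hcon => hT.ne ?_⟩
          rw [hTeq]
          exact congrArg (Finset.image Sum.inl) (le_antisymm hTsub hcon)
        refine (mem_joinOf_iff K L T).2 ⟨hmin' _ hss, ?_⟩
        have : T.toRight = ∅ := by
          rw [hTeq]; ext x; simp
        rw [this]; exact hLne
    · constructor
      · intro hmem
        have := (mem_joinOf_iff K L _).1 hmem
        have heq : (T'.image (Sum.inr : W → V ⊕ W)).toRight = T' := by ext x; simp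
        rw [heq] at this
        exact hT' this.2
      · intro T hT
        obtain ⟨hTeq, hTsub⟩ := subset_image_inr hT.subset
        have hss : T.toRight ⊂ T' := by
          refine ⟨hTsub, fun hcon => hT.ne ?_⟩
          rw [hTeq]
          exact congrArg (Finset.image Sum.inr) (le_antisymm hTsub hcon)
        refine (mem_joinOf_iff K L T).2 ⟨?_, hmin' _ hss⟩
        have : T.toLeft = ∅ := by
          rw [hTeq]; ext x; simp
        rw [this]; exact hKne

lemma fullCopy_inl_subset_iff [DecidableEq V] [DecidableEq W] {J : V → ℕ} {J' : W → ℕ} (S : Finset V)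
    (τ : Finset ((Σ i : V, Fin (J i)) ⊕ (Σ j : W, Fin (J' j)))) :
    fullCopy (Sum.elim J J') (S.image Sum.inl) ⊆ τ.image (sumSigmaVertexEquiv J J') ↔
      fullCopy J S ⊆ τ.toLeft := by
  constructor
  · intro h x hx
    obtain ⟨i, k⟩ := x
    have hi : i ∈ S := by simpa [fullCopy] using hx
    have hy : (⟨Sum.inl i, k⟩ : Σ x : V ⊕ W, Fin (Sum.elim J J' x)) ∈
        fullCopy (Sum.elim J J') (S.image Sum.inl) := by
      simp [fullCopy, hi]; exact Finset.mem_univ _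
    obtain ⟨a, ha, hae⟩ := Finset.mem_image.1 (h hy)
    have : a = Sum.inl ⟨i, k⟩ := by
      apply (sumSigmaVertexEquiv J J').injective
      rw [hae]; rfl
    rw [this] at ha
    exact Finset.mem_toLeft.2 ha
  · intro h y hy
    obtain ⟨z, k⟩ := y
    have hz : z ∈ S.image Sum.inl := by simpa [fullCopy] using hy
    obtain ⟨i, hi, rfl⟩ := Finset.mem_image.1 hz
    have hmem : (⟨i, k⟩ : Σ i : V, Fin (J i)) ∈ fullCopy J S := by
      simp [fullCopy, hi]; exact Finset.mem_univ _
    exact Finset.mem_image.2 ⟨Sum.inl ⟨i, k⟩, Finset.mem_toLeft.1 (h hmem), rfl⟩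

lemma fullCopy_inr_subset_iff [DecidableEq V] [DecidableEq W] {J : V → ℕ} {J' : W → ℕ} (S : Finset W)
    (τ : Finset ((Σ i : V, Fin (J i)) ⊕ (Σ j : W, Fin (J' j)))) :
    fullCopy (Sum.elim J J') (S.image Sum.inr) ⊆ τ.image (sumSigmaVertexEquiv J J') ↔
      fullCopy J' S ⊆ τ.toRight := by
  constructor
  · intro h x hx
    obtain ⟨i, k⟩ := x
    have hi : i ∈ S := by simpa [fullCopy] using hx
    have hy : (⟨Sum.inr i, k⟩ : Σ x : V ⊕ W, Fin (Sum.elim J J' x)) ∈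
        fullCopy (Sum.elim J J') (S.image Sum.inr) := by
      simp [fullCopy, hi]; exact Finset.mem_univ _
    obtain ⟨a, ha, hae⟩ := Finset.mem_image.1 (h hy)
    have : a = Sum.inr ⟨i, k⟩ := by
      apply (sumSigmaVertexEquiv J J').injective
      rw [hae]; rfl
    rw [this] at ha
    exact Finset.mem_toRight.2 ha
  · intro h y hy
    obtain ⟨z, k⟩ := y
    have hz : z ∈ S.image Sum.inr := by simpa [fullCopy] using hy
    obtain ⟨i, hi, rfl⟩ := Finset.mem_image.1 hz
    have hmem : (⟨i, k⟩ : Σ j : W, Fin (J' j)) ∈ fullCopy J' S := by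
      simp [fullCopy, hi]; exact Finset.mem_univ _
    exact Finset.mem_image.2 ⟨Sum.inr ⟨i, k⟩, Finset.mem_toRight.1 (h hmem), rfl⟩

/-- `K(J) ⋆ L(J′) = (K ⋆ L)(J ∪ J′)` for simplicial complexes `K`, `L` on disjoint
vertex sets and vectors `J`, `J′` of positive integers. -/
theorem join_wedgeJ_eq_wedgeJ_join [DecidableEq V] [DecidableEq W]
    (K : Set (Finset V)) (L : Set (Finset W))
    (hK : ∀ σ ∈ K, ∀ τ ⊆ σ, τ ∈ K) (hL : ∀ σ ∈ L, ∀ τ ⊆ σ, τ ∈ L)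
    (hKne : ∅ ∈ K) (hLne : ∅ ∈ L)
    (J : V → ℕ) (J' : W → ℕ) (hJ : ∀ i, 0 < J i) (hJ' : ∀ j, 0 < J' j) :
    ∀ τ : Finset ((Σ i : V, Fin (J i)) ⊕ (Σ j : W, Fin (J' j))),
      τ ∈ joinOf (wedgeJ K J) (wedgeJ L J') ↔
        τ.image (sumSigmaVertexEquiv J J') ∈ wedgeJ (joinOf K L) (Sum.elim J J') := by
  intro τ
  rw [mem_joinOf_iff]
  constructor
  · rintro ⟨h₁, h₂⟩ S hS hsub
    rcases (minNonFace_joinOf_iff K L hKne hLne S).1 hS with ⟨S', hS', rfl⟩ | ⟨T', hT', rfl⟩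
    · exact h₁ S' hS' ((fullCopy_inl_subset_iff S' τ).1 hsub)
    · exact h₂ T' hT' ((fullCopy_inr_subset_iff T' τ).1 hsub)
  · intro h
    constructor
    · intro S' hS' hsub
      exact h (S'.image Sum.inl)
        ((minNonFace_joinOf_iff K L hKne hLne _).2 (Or.inl ⟨S', hS', rfl⟩))
        ((fullCopy_inl_subset_iff S' τ).2 hsub)
    · intro T' hT' hsub
      exact h (T'.image Sum.inr)
        ((minNonFace_joinOf_iff K L hKne hLne _).2 (Or.inr ⟨T', hT', rfl⟩))
        ((fullCopy_inr_subset_iff T' τ).2 hsub)
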